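/- arXiv:1003.5831 — 4 statements merged into one kernel-verified Lean document; each statement's English description precedes it below -/
import Mathlib

section
/- Let (S, A) be a computable physical model whose set A of observable quantities is finite. Then (S, A) is isomorphic to some computable physical model all of whose observable quantities are projection functions; specifically, if A = {α₁, …, αₙ}, then (S, A) is isomorphic to the computable physical model (T, B) where T = { ⟨α₁(s), α₂(s), …, αₙ(s), s⟩ : s ∈ S } and B = {π₁^{n+1}, π₂^{n+1}, …, πₙ^{n+1}}. -/
/-- Cantor's pairing function `⟨x,y⟩ = (x² + 2xy + y² + 3x + y)/2`. -/
def cantorPair (x y : ℕ) : ℕ := (x * x + 2 * x * y + y * y + 3 * x + y) / 2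

/-- The code `⟨x₁, …, xₙ⟩` of a finite sequence of non-negative integers, obtained by
iterating Cantor's pairing function: `⟨x,y,z⟩ = ⟨⟨x,y⟩,z⟩`, and so on. -/
def seqEncode : List ℕ → ℕ
  | [] => 0
  | x :: xs => xs.foldl cantorPair x

/-- `π` is the projection function `πᵢⁿ` (with `0`-based index `i`), i.e.
`π ⟨x₁, …, xₙ⟩ = x_{i+1}` for every length-`n` sequence. -/
def IsProjection (n i : ℕ) (π : ℕ → ℕ) : Prop :=
  ∀ l : List ℕ, l.length = n → π (seqEncode l) = l.getD i 0

/-- Isomorphism of physical models whose states are non-negative integers and whose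
observable quantities are functions from non-negative integers to non-negative
integers: bijections `φ : S → T` and `ψ : A → B` with `α(s) = ψ(α)(φ(s))`. -/
def Isomorphic (S : Set ℕ) (A : Set (ℕ → ℕ)) (T : Set ℕ) (B : Set (ℕ → ℕ)) : Prop :=
  ∃ (φ : ℕ → ℕ) (ψ : (ℕ → ℕ) → ℕ → ℕ),
    Set.BijOn φ S T ∧ Set.BijOn ψ A B ∧ ∀ s ∈ S, ∀ α ∈ A, α s = ψ α (φ s)

/-- Inverse of Cantor's pairing function. -/
def cunpair : ℕ → ℕ × ℕ
  | 0 => (0, 0)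
  | z + 1 =>
    (fun p : ℕ × ℕ => if p.2 = 0 then (0, p.1 + 1) else (p.1 + 1, p.2 - 1)) (cunpair z)

lemma cantorPair_succ_left (x y : ℕ) :
    cantorPair (x + 1) y = cantorPair x (y + 1) + 1 := by
  unfold cantorPair
  have h : (x+1)*(x+1) + 2*(x+1)*y + y*y + 3*(x+1) + y
      = (x*x + 2*x*(y+1) + (y+1)*(y+1) + 3*x + (y+1)) + 2 := by ring
  rw [h, Nat.add_div_right _ (by norm_num)]

lemma cantorPair_zero_succ (y : ℕ) :
    cantorPair 0 (y + 1) = cantorPair y 0 + 1 := by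
  unfold cantorPair
  have h : 0*0 + 2*0*(y+1) + (y+1)*(y+1) + 3*0 + (y+1)
      = (y*y + 2*y*0 + 0*0 + 3*y + 0) + 2 := by ring
  rw [h, Nat.add_div_right _ (by norm_num)]

lemma cantorPair_eq_zero {x y : ℕ} (h : cantorPair x y = 0) : x = 0 ∧ y = 0 := by
  unfold cantorPair at h
  have h2 : x*x + 2*x*y + y*y + 3*x + y < 2 := by
    by_contra hc
    push_neg at hc
    have := Nat.div_le_div_right (c := 2) hc
    simp at this; omega
  have h3 : 3*x + y ≤ x*x + 2*x*y + y*y + 3*x + y := by nlinarith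
  have h4 : y*y + y ≤ x*x + 2*x*y + y*y + 3*x + y := by nlinarith
  have h5 : y = 0 ∨ y ≤ y*y := by
    rcases Nat.eq_zero_or_pos y with h0 | h0
    · exact Or.inl h0
    · exact Or.inr (Nat.le_mul_of_pos_left y h0)
  omega

lemma cunpair_eq : ∀ z x y, cantorPair x y = z → cunpair z = (x, y) := by
  intro z
  induction z with
  | zero =>
    intro x y h
    obtain ⟨hx, hy⟩ := cantorPair_eq_zero h
    subst hx; subst hy; rfl
  | succ z ih =>
    intro x y h
    match x, y with
    | 0, 0 => simp [cantorPair] at h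
    | 0, y + 1 =>
      rw [cantorPair_zero_succ] at h
      have := ih y 0 (by omega)
      simp [cunpair, this]
    | x + 1, y =>
      rw [cantorPair_succ_left] at h
      have := ih x (y + 1) (by omega)
      simp [cunpair, this]

lemma cunpair_cantorPair (x y : ℕ) : cunpair (cantorPair x y) = (x, y) :=
  cunpair_eq _ x y rfl

lemma seqEncode_concat (x : ℕ) (xs : List ℕ) (y : ℕ) :
    seqEncode ((x :: xs) ++ [y]) = cantorPair (seqEncode (x :: xs)) y := by
  simp [seqEncode, List.foldl_append]

lemma cunpair_strip : ∀ (m : List ℕ) (x : ℕ) (xs : List ℕ),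
    (fun z => (cunpair z).1)^[m.length] (seqEncode ((x :: xs) ++ m)) = seqEncode (x :: xs) := by
  intro m
  induction m using List.reverseRecOn with
  | nil => intro x xs; simp
  | append_singleton m' y ih =>
    intro x xs
    have h1 : (x :: xs) ++ (m' ++ [y]) = (x :: (xs ++ m')) ++ [y] := by simp
    rw [h1, List.length_append, List.length_singleton, Function.iterate_succ_apply,
      seqEncode_concat]
    show (fun z => (cunpair z).1)^[m'.length]
        ((cunpair (cantorPair (seqEncode (x :: (xs ++ m'))) y)).1) = _
    rw [cunpair_cantorPair]
    simpa using ih x xs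

lemma cunpair_last (x : ℕ) (xs : List ℕ) (y : ℕ) :
    (cunpair (seqEncode ((x :: xs) ++ [y]))).2 = y := by
  rw [seqEncode_concat, cunpair_cantorPair]

lemma cantorPair_primrec : Primrec₂ cantorPair := by
  unfold cantorPair
  have f : Primrec (Prod.fst : ℕ × ℕ → ℕ) := Primrec.fst
  have s : Primrec (Prod.snd : ℕ × ℕ → ℕ) := Primrec.snd
  exact Primrec.nat_div.comp
    (Primrec.nat_add.comp
      (Primrec.nat_add.comp
        (Primrec.nat_add.comp
          (Primrec.nat_add.comp (Primrec.nat_mul.comp f f)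
            (Primrec.nat_mul.comp (Primrec.nat_mul.comp (Primrec.const 2) f) s))
          (Primrec.nat_mul.comp s s))
        (Primrec.nat_mul.comp (Primrec.const 3) f))
      s)
    (Primrec.const 2)

lemma cunpair_computable : Computable cunpair := by
  have hstep : Primrec (fun p : ℕ × ℕ => if p.2 = 0 then (0, p.1 + 1) else (p.1 + 1, p.2 - 1)) := by
    refine Primrec.ite (Primrec.eq.comp Primrec.snd (Primrec.const 0)) ?_ ?_
    · exact (Primrec.const 0).pair (Primrec.succ.comp Primrec.fst)
    · exact (Primrec.succ.comp Primrec.fst).pair (Primrec.pred.comp Primrec.snd)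
  have h := Computable.nat_rec (f := (id : ℕ → ℕ)) (g := fun _ : ℕ => ((0, 0) : ℕ × ℕ))
    (h := fun _ (p : ℕ × (ℕ × ℕ)) =>
      if p.2.2 = 0 then (0, p.2.1 + 1) else (p.2.1 + 1, p.2.2 - 1))
    Computable.id (Computable.const (0, 0))
    (hstep.to_comp.comp (Computable.snd.comp Computable.snd))
  refine h.of_eq fun z => ?_
  induction z with
  | zero => rfl
  | succ z ih => simp only [cunpair]; rw [← ih]; rfl

lemma comp_iterate {f : ℕ → ℕ} (hf : Computable f) : ∀ k, Computable f^[k] := by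
  intro k
  induction k with
  | zero => exact Computable.id
  | succ k ih => rw [Function.iterate_succ']; exact hf.comp ih

lemma seqEncode_map_computable : ∀ (g : ℕ → ℕ) (L : List (ℕ → ℕ)), Computable g →
    (∀ f ∈ L, Computable f) →
    Computable (fun s => seqEncode ((g :: L).map (fun f => f s))) := by
  intro g L
  induction L using List.reverseRecOn with
  | nil => intro hg _; simpa [seqEncode] using hg
  | append_singleton L' f ih =>
    intro hg hL
    have h1 : Computable (fun s => seqEncode ((g :: L').map (fun f => f s))) :=
      ih hg (fun f hf => hL f (by simp at hf ⊢; tauto))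
    have hf : Computable f := hL f (by simp)
    have := (cantorPair_primrec.to_comp).comp h1 hf
    refine this.of_eq fun s => ?_
    have : (g :: (L' ++ [f])).map (fun f => f s)
        = (g s :: L'.map (fun f => f s)) ++ [f s] := by simp
    rw [this, seqEncode_concat]
    rfl

def projFn (n i : ℕ) : ℕ → ℕ :=
  if i = 0 then (fun z => (cunpair z).1)^[n]
  else fun z => (cunpair ((fun z => (cunpair z).1)^[n - i] z)).2

lemma projFn_computable (n i : ℕ) : Computable (projFn n i) := by
  have hu1 : Computable fun z => (cunpair z).1 := Computable.fst.comp cunpair_computable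
  unfold projFn
  split
  · exact comp_iterate hu1 n
  · exact Computable.snd.comp (cunpair_computable.comp (comp_iterate hu1 (n - i)))

lemma projFn_isProjection (n i : ℕ) (h : i < n) : IsProjection (n + 1) i (projFn n i) := by
  intro l hlen
  rcases Nat.eq_zero_or_pos i with hi | hi
  · subst hi
    cases l with
    | nil => simp at hlen
    | cons a t =>
      simp only [projFn, if_pos rfl]
      have ht : t.length = n := by simpa using hlen
      have := cunpair_strip t a []
      rw [ht] at this
      simpa [seqEncode] using this
  · have hil : i < l.length := by omega
    have h1 : l = l.take (i + 1) ++ l.drop (i + 1) := (List.take_append_drop _ _).symm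
    have htake1 : l.take (i + 1) = l.take i ++ [l[i]] := by
      rw [List.take_succ, List.getElem?_eq_getElem hil]; rfl
    have hlt : (l.take i).length = i := by
      rw [List.length_take]; omega
    obtain ⟨b, bs, hbs⟩ := List.exists_cons_of_ne_nil
      (show l.take i ≠ [] by intro h0; rw [h0] at hlt; simp at hlt; omega)
    have hdrop : (l.drop (i + 1)).length = n - i := by
      rw [List.length_drop]; omega
    have hL : l = (b :: (bs ++ [l[i]])) ++ l.drop (i + 1) := by
      conv_lhs => rw [h1]
      rw [htake1, hbs]; simp
    have hstrip := cunpair_strip (l.drop (i + 1)) b (bs ++ [l[i]])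
    rw [hdrop] at hstrip
    have hi0 : i ≠ 0 := by omega
    simp only [projFn, if_neg hi0]
    rw [show seqEncode l = seqEncode ((b :: (bs ++ [l[i]])) ++ l.drop (i + 1)) from by rw [← hL]]
    rw [hstrip]
    have : (b :: (bs ++ [l[i]])) = (b :: bs) ++ [l[i]] := by simp
    rw [this, cunpair_last, List.getD_eq_getElem l 0 hil]

lemma projFn_inj {n i j : ℕ} (hi : i < n) (hj : j < n)
    (h : projFn n i = projFn n j) : i = j := by
  by_contra hne
  set l : List ℕ := (List.replicate (n + 1) 0).set i 1 with hl
  have hlen : l.length = n + 1 := by simp [hl]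
  have h1 := projFn_isProjection n i hi l hlen
  have h2 := projFn_isProjection n j hj l hlen
  rw [h] at h1
  rw [h1] at h2
  have hgi : l.getD i 0 = 1 := by
    rw [List.getD_eq_getElem l 0 (by omega)]
    simp [hl, List.getElem_set, hne]
  have hgj : l.getD j 0 = 0 := by
    rw [List.getD_eq_getElem l 0 (by omega)]
    simp [hl, List.getElem_set, hne]
  rw [hgi, hgj] at h2
  exact one_ne_zero h2

lemma decide_and_eq (p q : Prop) [Decidable p] [Decidable q] :
    decide (p ∧ q) = (decide p && decide q) := by
  by_cases hp : p <;> by_cases hq : q <;> simp [hp, hq]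

/-- A computable physical model `(S, A)` with a finite set
`A = {α₁, …, αₙ}` of (distinct) observable quantities is isomorphic to a computable
physical model all of whose observable quantities are projection functions; namely to
`(T, B)` where `T = { ⟨α₁(s), …, αₙ(s), s⟩ : s ∈ S }` and `B = {π₁ⁿ⁺¹, …, πₙⁿ⁺¹}`. -/
theorem isomorphic_to_projection_model (n : ℕ) (S : Set ℕ) (α : Fin n → ℕ → ℕ)
    (hinj : Function.Injective α)
    (hS : ComputablePred (· ∈ S)) (hα : ∀ i, Computable (α i)) :
    ∃ π : Fin n → ℕ → ℕ,
      (∀ i : Fin n, Computable (π i) ∧ IsProjection (n + 1) i (π i)) ∧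
      ComputablePred
        (· ∈ ((fun s => seqEncode ((List.ofFn fun i => α i s) ++ [s])) '' S)) ∧
      Isomorphic S (Set.range α)
        ((fun s => seqEncode ((List.ofFn fun i => α i s) ++ [s])) '' S)
        (Set.range π) := by
  classical
  cases n with
  | zero =>
    have he : (fun s => seqEncode ((List.ofFn fun i : Fin 0 => α i s) ++ [s]))
        = fun s => s := by
      funext s
      simp [seqEncode]
    have himg : ((fun s => seqEncode ((List.ofFn fun i : Fin 0 => α i s) ++ [s])) '' S) = S := by
      rw [he, Set.image_id']
    refine ⟨fun i => i.elim0, fun i => i.elim0, ?_, ?_⟩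
    · rw [himg]; exact hS
    · refine ⟨id, id, ?_, ?_, ?_⟩
      · rw [himg]; exact Set.bijOn_id S
      · rw [Set.range_eq_empty α, Set.range_eq_empty]
        exact Set.bijOn_empty id
      · intro s _ a ha
        rw [Set.range_eq_empty α] at ha
        exact absurd ha (Set.notMem_empty a)
  | succ m =>
    have hofFn : ∀ s : ℕ, (List.ofFn fun i : Fin (m + 1) => α i s) ++ [s]
        = (α 0 s :: List.ofFn fun i : Fin m => α i.succ s) ++ [s] := by
      intro s; rw [List.ofFn_succ]
    have hdec : ∀ s : ℕ,
        (cunpair (seqEncode ((List.ofFn fun i : Fin (m + 1) => α i s) ++ [s]))).2 = s := by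
      intro s; rw [hofFn s, cunpair_last]
    have hecomp :
        Computable (fun s => seqEncode ((List.ofFn fun i : Fin (m + 1) => α i s) ++ [s])) := by
      have hL : ∀ f ∈ ((List.ofFn fun i : Fin m => α i.succ) ++ [@id ℕ]), Computable f := by
        intro f hf
        simp only [List.mem_append, List.mem_ofFn, List.mem_singleton] at hf
        rcases hf with ⟨i, rfl⟩ | rfl
        · exact hα _
        · exact Computable.id
      have h := seqEncode_map_computable (α 0) _ (hα 0) hL
      refine h.of_eq fun s => ?_
      congr 1
      rw [hofFn s]
      simp [List.map_ofFn, Function.comp_def]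
    -- computability of the image set
    obtain ⟨instS, hSb⟩ := hS
    have hmem : ComputablePred
        (· ∈ ((fun s => seqEncode ((List.ofFn fun i : Fin (m + 1) => α i s) ++ [s])) '' S)) := by
      have hiff : ∀ z : ℕ,
          ((cunpair z).2 ∈ S ∧
            (fun s => seqEncode ((List.ofFn fun i : Fin (m + 1) => α i s) ++ [s]))
              ((cunpair z).2) = z)
          ↔ z ∈ ((fun s => seqEncode ((List.ofFn fun i : Fin (m + 1) => α i s) ++ [s])) '' S) := by
        intro z
        constructor
        · rintro ⟨h1, h2⟩
          exact ⟨_, h1, h2⟩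
        · rintro ⟨s, hs, rfl⟩
          constructor
          · simpa only [hdec] using hs
          · simp only [hdec]
      have hb1 : Computable fun z : ℕ => decide ((cunpair z).2 ∈ S) :=
        hSb.comp (Computable.snd.comp cunpair_computable)
      have hb2 : Computable fun z : ℕ =>
          decide ((fun s => seqEncode ((List.ofFn fun i : Fin (m + 1) => α i s) ++ [s]))
            ((cunpair z).2) = z) :=
        (Primrec.eq.decide.to_comp).comp
          (hecomp.comp (Computable.snd.comp cunpair_computable)) Computable.id
      have hband : Computable fun z : ℕ =>
          (decide ((cunpair z).2 ∈ S) &&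
            decide ((fun s => seqEncode ((List.ofFn fun i : Fin (m + 1) => α i s) ++ [s]))
              ((cunpair z).2) = z)) := by
        refine (Computable.cond hb1 hb2 (Computable.const false)).of_eq fun z => ?_
        cases hc : decide ((cunpair z).2 ∈ S) <;> simp [hc]
      refine ⟨fun z => Classical.dec _, ?_⟩
      refine hband.of_eq fun z => ?_
      rw [← decide_and_eq, decide_eq_decide]
      exact hiff z
    refine ⟨fun i : Fin (m + 1) => projFn (m + 1) (i : ℕ),
      fun i => ⟨projFn_computable _ _, projFn_isProjection _ _ i.isLt⟩, hmem, ?_⟩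
    -- the isomorphism
    set ψ : (ℕ → ℕ) → ℕ → ℕ :=
      fun g => if h : ∃ i : Fin (m + 1), α i = g then projFn (m + 1) (h.choose : ℕ) else g
      with hψdef
    have hψα : ∀ i : Fin (m + 1), ψ (α i) = projFn (m + 1) (i : ℕ) := by
      intro i
      have h : ∃ k : Fin (m + 1), α k = α i := ⟨i, rfl⟩
      have h1 : ψ (α i) = projFn (m + 1) (h.choose : ℕ) := by
        rw [hψdef]; exact dif_pos h
      rw [h1, hinj h.choose_spec]
    refine ⟨fun s => seqEncode ((List.ofFn fun i : Fin (m + 1) => α i s) ++ [s]), ψ, ?_, ?_, ?_⟩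
    · refine Set.InjOn.bijOn_image ?_
      intro s hs s' hs' h
      have h2 := congrArg (fun z => (cunpair z).2) h
      simpa only [hdec] using h2
    · refine ⟨?_, ?_, ?_⟩
      · rintro g ⟨i, rfl⟩
        rw [hψα i]
        exact ⟨i, rfl⟩
      · rintro g ⟨i, rfl⟩ g' ⟨j, rfl⟩ h
        rw [hψα i, hψα j] at h
        exact congrArg α (Fin.ext (projFn_inj i.isLt j.isLt h))
      · rintro b ⟨i, rfl⟩
        exact ⟨α i, ⟨i, rfl⟩, hψα i⟩
    · rintro s hs g ⟨i, rfl⟩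
      rw [hψα i]
      have hlen : ((List.ofFn fun j : Fin (m + 1) => α j s) ++ [s]).length = (m + 1) + 1 := by
        simp
      have hproj := projFn_isProjection (m + 1) (i : ℕ) i.isLt _ hlen
      show α i s = projFn (m + 1) (i : ℕ)
        (seqEncode ((List.ofFn fun j : Fin (m + 1) => α j s) ++ [s]))
      rw [hproj]
      have hilt : (i : ℕ) < ((List.ofFn fun j : Fin (m + 1) => α j s) ++ [s]).length := by
        simp
      rw [List.getD_eq_getElem _ 0 hilt]
      have hilt2 : (i : ℕ) < (List.ofFn fun j : Fin (m + 1) => α j s).length := by simp; omega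
      rw [List.getElem_append_left hilt2, List.getElem_ofFn, Fin.eta]
end

section
/- A non-negative integer physical model (S, A) is isomorphic to some computable physical model whenever S is a recursively enumerable set and every member of A is a partial recursive function whose domain includes all members of S. -/
/-- Isomorphism between a non-negative integer physical model `(S, A)` whose observable
quantities are partial functions (defined on all of `S`) and a model `(T, B)` whose
observable quantities are total functions: bijections `φ : S → T` and `ψ : A → B` with
`α(s) = ψ(α)(φ(s))` for all `s ∈ S` and `α ∈ A`. -/
def IsomorphicPT (S : Set ℕ) (A : Set (ℕ →. ℕ)) (T : Set ℕ) (B : Set (ℕ → ℕ)) : Prop :=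
  ∃ (φ : ℕ → ℕ) (ψ : (ℕ →. ℕ) → ℕ → ℕ),
    Set.BijOn φ S T ∧ Set.BijOn ψ A B ∧
    ∀ s ∈ S, ∀ α ∈ A, α s = Part.some (ψ α (φ s))

open Nat.Partrec (Code)
open Nat.Partrec.Code

/-- A non-negative integer physical model `(S, A)` is isomorphic to some
computable physical model whenever `S` is recursively enumerable and every member of `A`
is a partial recursive function whose domain includes all members of `S`. -/
theorem isomorphic_to_computable_model (S : Set ℕ) (A : Set (ℕ →. ℕ))
    (hS : REPred (· ∈ S)) (hA : ∀ α ∈ A, Partrec α)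
    (hdom : ∀ α ∈ A, ∀ s ∈ S, (α s).Dom) :
    ∃ (T : Set ℕ) (B : Set (ℕ → ℕ)),
      ComputablePred (· ∈ T) ∧ (∀ β ∈ B, Computable β) ∧
      IsomorphicPT S A T B := by
  classical
  -- a code `c` semideciding membership in `S`
  have hS' : Partrec fun n => (Part.assert (n ∈ S) fun _ => Part.some ()).map fun _ => 0 :=
    hS.map ((Computable.const 0).comp Computable.fst).to₂
  obtain ⟨c, hc⟩ := exists_code.1 (Partrec.nat_iff.1 hS')
  -- stage function
  set e : ℕ → ℕ → Bool := fun n t => (evaln t c n).isSome with he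
  have hmono : ∀ {n a b}, a ≤ b → e n a = true → e n b = true := by
    intro n a b hab h
    obtain ⟨x, hx⟩ := Option.isSome_iff_exists.1 h
    exact Option.isSome_iff_exists.2 ⟨x, evaln_mono hab hx⟩
  have hmem : ∀ n, n ∈ S ↔ ∃ k, e n k = true := by
    intro n
    constructor
    · intro hn
      have h0 : 0 ∈ eval c n := by
        rw [hc]; simp [hn, Part.assert]
      obtain ⟨k, hk⟩ := evaln_complete.1 h0
      exact ⟨k, Option.isSome_iff_exists.2 ⟨0, hk⟩⟩
    · rintro ⟨k, hk⟩
      obtain ⟨x, hx⟩ := Option.isSome_iff_exists.1 hk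
      have : x ∈ eval c n := evaln_complete.2 ⟨k, hx⟩
      have hd : (eval c n).Dom := Part.dom_iff_mem.2 ⟨x, this⟩
      rw [hc] at hd
      simpa [Part.assert] using hd
  -- the decidable set T
  set fT : ℕ → Bool := fun m =>
    e m.unpair.1 m.unpair.2 && (m.unpair.2 == 0 || !(e m.unpair.1 (m.unpair.2 - 1))) with hfTdef
  set T : Set ℕ := {m | fT m = true} with hTdef
  have hfT : Computable fT := by
    have hu1 : Primrec fun m : ℕ => m.unpair.1 := Primrec.fst.comp Primrec.unpair
    have hu2 : Primrec fun m : ℕ => m.unpair.2 := Primrec.snd.comp Primrec.unpair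
    have hev : Primrec fun p : ℕ × ℕ => (evaln p.2 c p.1).isSome :=
      Primrec.option_isSome.comp
        (primrec_evaln.comp ((Primrec.snd.pair (Primrec.const c)).pair Primrec.fst))
    have h1 : Primrec fun m : ℕ => e m.unpair.1 m.unpair.2 := hev.comp (hu1.pair hu2)
    have h2 : Primrec fun m : ℕ => e m.unpair.1 (m.unpair.2 - 1) :=
      hev.comp (hu1.pair (Primrec.pred.comp hu2))
    have h3 : Primrec fun m : ℕ => (m.unpair.2 == 0 || !(e m.unpair.1 (m.unpair.2 - 1))) :=
      Primrec.or.comp (Primrec.beq.comp hu2 (Primrec.const 0)) (Primrec.not.comp h2)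
    exact (Primrec.and.comp h1 h3).to_comp
  -- characterization of membership in T
  have hTmem : ∀ m, m ∈ T ↔
      e m.unpair.1 m.unpair.2 = true ∧
        (m.unpair.2 ≠ 0 → e m.unpair.1 (m.unpair.2 - 1) = false) := by
    intro m
    simp only [hTdef, Set.mem_setOf_eq, hfTdef, Bool.and_eq_true, Bool.or_eq_true, beq_iff_eq,
      Bool.not_eq_true', and_congr_right_iff]
    intro _
    constructor
    · rintro (h | h) ht
      · exact absurd h ht
      · exact h
    · intro h
      by_cases ht : m.unpair.2 = 0
      · exact Or.inl ht
      · exact Or.inr (h ht)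
  have hTS : ∀ m ∈ T, m.unpair.1 ∈ S := fun m hm =>
    (hmem _).2 ⟨m.unpair.2, ((hTmem m).1 hm).1⟩
  -- the bijection φ
  set φ : ℕ → ℕ := fun n =>
    if h : ∃ k, e n k = true then Nat.pair n (Nat.find h) else 0 with hφdef
  have hφS : ∀ n ∈ S, ∀ (h : ∃ k, e n k = true), φ n = Nat.pair n (Nat.find h) := by
    intro n _ h; simp [hφdef, dif_pos h]
  have hφT : ∀ n ∈ S, φ n ∈ T := by
    intro n hn
    have h : ∃ k, e n k = true := (hmem n).1 hn
    rw [hφS n hn h, hTmem]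
    simp only [Nat.unpair_pair]
    refine ⟨Nat.find_spec h, fun ht => ?_⟩
    have := Nat.find_min h (m := Nat.find h - 1) (by omega)
    simpa using this
  have hφinv : ∀ n ∈ S, (φ n).unpair.1 = n := by
    intro n hn
    rw [hφS n hn ((hmem n).1 hn)]; simp
  have hBij : Set.BijOn φ S T := by
    refine ⟨hφT, fun a ha b hb hab => ?_, fun m hm => ?_⟩
    · have := congrArg (fun x => x.unpair.1) hab
      simpa [hφinv a ha, hφinv b hb] using this
    · -- surjectivity: m ∈ T comes from its first coordinate
      refine ⟨m.unpair.1, hTS m hm, ?_⟩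
      obtain ⟨h1, h2⟩ := (hTmem m).1 hm
      have hex : ∃ k, e m.unpair.1 k = true := ⟨m.unpair.2, h1⟩
      rw [hφS _ (hTS m hm) hex]
      have hfind : Nat.find hex = m.unpair.2 := by
        have hle : Nat.find hex ≤ m.unpair.2 := Nat.find_le h1
        rcases lt_or_eq_of_le hle with hlt | heq
        · exfalso
          have ht0 : m.unpair.2 ≠ 0 := by omega
          have := hmono (show Nat.find hex ≤ m.unpair.2 - 1 by omega) (Nat.find_spec hex)
          rw [h2 ht0] at this
          exact Bool.false_ne_true this
        · exact heq
      rw [hfind, Nat.pair_unpair]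
  -- codes for elements of A
  have hcode : ∀ α ∈ A, ∃ d : Code, eval d = α := fun α hα =>
    exists_code.1 (Partrec.nat_iff.1 (hA α hα))
  -- the map ψ
  set ψ : (ℕ →. ℕ) → ℕ → ℕ := fun α =>
    if hα : α ∈ A then fun m =>
      if hm : m ∈ T then (α m.unpair.1).get (hdom α hα _ (hTS m hm))
      else Encodable.encode (hcode α hα).choose
    else fun _ => 0 with hψdef
  -- an element outside T
  obtain ⟨m₀, hm₀⟩ : ∃ m, m ∉ T := by
    by_cases hSne : ∃ s, s ∈ S
    · obtain ⟨s, hs⟩ := hSne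
      have h : ∃ k, e s k = true := (hmem s).1 hs
      refine ⟨Nat.pair s (Nat.find h + 1), fun hmem' => ?_⟩
      obtain ⟨_, h2⟩ := (hTmem _).1 hmem'
      simp only [Nat.unpair_pair] at h2
      have := h2 (by omega)
      simp only [Nat.add_sub_cancel] at this
      rw [Nat.find_spec h] at this
      simp at this
    · exact ⟨0, fun h0 => hSne ⟨_, hTS 0 h0⟩⟩
  have hψval : ∀ α (hα : α ∈ A), ∀ m (hm : m ∈ T),
      ψ α m = (α m.unpair.1).get (hdom α hα _ (hTS m hm)) := by
    intro α hα m hm; simp [hψdef, dif_pos hα, dif_pos hm]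
  have hψcomp : ∀ α ∈ A, Computable (ψ α) := by
    intro α hα
    have hg : Partrec fun m =>
        bif fT m then α m.unpair.1 else Part.some (Encodable.encode (hcode α hα).choose) :=
      Partrec.cond hfT
        ((hA α hα).comp ((Primrec.fst.comp Primrec.unpair).to_comp))
        (Computable.const _).partrec
    refine hg.of_eq fun m => ?_
    rw [PFun.coe_val]
    by_cases hm : m ∈ T
    · have hfm : fT m = true := hm
      rw [hfm]
      simp only [Bool.cond_true]
      rw [hψval α hα m hm]
      exact (Part.some_get _).symm
    · have hfm : fT m = false := by
        rw [hTdef] at hm; simpa using hm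
      rw [hfm]
      simp [hψdef, dif_pos hα, dif_neg hm]
  have hψinj : Set.InjOn ψ A := by
    intro α hα α' hα' hψeq
    have h1 : ψ α m₀ = ψ α' m₀ := congrFun hψeq m₀
    simp only [hψdef, dif_pos hα, dif_pos hα', dif_neg hm₀] at h1
    have hdeq : (hcode α hα).choose = (hcode α' hα').choose := Encodable.encode_injective h1
    have := (hcode α hα).choose_spec
    rw [hdeq, (hcode α' hα').choose_spec] at this
    exact this.symm
  refine ⟨T, ψ '' A, ComputablePred.computable_iff.2 ⟨fT, hfT, rfl⟩, ?_, φ, ψ, hBij,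
    hψinj.bijOn_image, ?_⟩
  · rintro β ⟨α, hα, rfl⟩
    exact hψcomp α hα
  · intro s hs α hα
    rw [hψval α hα _ (hφT s hs)]
    have : (φ s).unpair.1 = s := hφinv s hs
    rw [Part.some_get]
    exact congrArg α this.symm
end

section
/- Let B be a countable basis for the standard topology of ℝⁿ and let ν be a coding for B. Then there does not exist a partial recursive (oracle) functional φ with the property that for every singleton set {x} ⊆ ℝⁿ and for every basic representation R_x of {x} in the effective topology (B, ν), the function m ↦ φ(R_x, m), computed with oracle access to the characteristic function of R_x, is total and is an oracle for x in (B, ν). -/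
/-- Partial functions `ℕ →. ℕ` that are computable uniformly relative to an oracle:
`PartrecIn F` says that the functional `O ↦ F O` is computed by a single oracle machine,
so that `F O` is partial recursive relative to `O`, uniformly in the oracle `O`. -/
inductive PartrecIn : ((ℕ →. ℕ) → ℕ →. ℕ) → Prop
  | oracle : PartrecIn fun O => O
  | zero : PartrecIn fun _ => pure 0
  | succ : PartrecIn fun _ => ↑Nat.succ
  | left : PartrecIn fun _ => ↑fun n : ℕ => n.unpair.1
  | right : PartrecIn fun _ => ↑fun n : ℕ => n.unpair.2
  | pair {F G} : PartrecIn F → PartrecIn G →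
      PartrecIn fun O n => Nat.pair <$> F O n <*> G O n
  | comp {F G} : PartrecIn F → PartrecIn G →
      PartrecIn fun O n => G O n >>= F O
  | prec {F G} : PartrecIn F → PartrecIn G →
      PartrecIn fun O => Nat.unpaired fun a n =>
        n.rec (F O a) fun y IH => do let i ← IH; G O (Nat.pair a (Nat.pair y i))
  | rfind {F} : PartrecIn F →
      PartrecIn fun O a => Nat.rfind fun n => (fun m => m = 0) <$> F O (Nat.pair a n)

/-- `L` is a local basis for the point `x` with respect to the basis `Bas`. -/
def IsLocalBasis {X : Type*} (Bas : Set (Set X)) (L : Set (Set X)) (x : X) : Prop :=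
  L ⊆ Bas ∧ (∀ l ∈ L, x ∈ l) ∧ ∀ b ∈ Bas, x ∈ b → ∃ l ∈ L, l ⊆ b

/-- `φ : ℕ → dom` is an oracle for the point `x` in the effective topology whose basis
is coded by `code` on the domain `dom`: the image under `code` of the range of `φ`
is a local basis for `x`. -/
def IsOracleFor {X : Type*} (dom : Set ℕ) (code : ℕ → Set X) (x : X) (φ : ℕ → ℕ) : Prop :=
  (∀ n, φ n ∈ dom) ∧ IsLocalBasis (code '' dom) (code '' Set.range φ) x

/-- `R` is a basic representation of the set `A` in the effective topology whose basis
is `code '' dom`, coded by `code` on the domain `dom`. -/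
def IsBasicRep {X : Type*} (dom : Set ℕ) (code : ℕ → Set X) (A : Set X) (R : Set ℕ) : Prop :=
  R ⊆ dom ∧ ∀ x : X, x ∈ A ↔ ∃ L, IsLocalBasis (code '' dom) L x ∧ L ⊆ code '' R

theorem PartrecIn.mono {F} (hF : PartrecIn F) {O O' : ℕ →. ℕ}
    (hOO : ∀ k a, a ∈ O k → a ∈ O' k) : ∀ {m a}, a ∈ F O m → a ∈ F O' m := by
  induction hF with
  | oracle => exact fun h => hOO _ _ h
  | zero => exact fun h => h
  | succ => exact fun h => h
  | left => exact fun h => h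
  | right => exact fun h => h
  | pair hf hg ihf ihg =>
    intro m a h
    simp only [Seq.seq, Part.bind_eq_bind, Part.mem_bind_iff, Part.map_eq_map,
      Part.mem_map_iff] at h ⊢
    obtain ⟨b, ⟨b', hb', rfl⟩, c, hc, rfl⟩ := h
    exact ⟨_, ⟨b', ihf hb', rfl⟩, c, ihg hc, rfl⟩
  | comp hf hg ihf ihg =>
    intro m a h
    rcases Part.mem_bind_iff.1 h with ⟨b, hb, h2⟩
    exact Part.mem_bind_iff.2 ⟨b, ihg hb, ihf h2⟩
  | prec hf hg ihf ihg =>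
    intro m a h
    simp only [Nat.unpaired] at h ⊢
    generalize m.unpair.2 = k at h ⊢
    induction k generalizing a with
    | zero => exact ihf h
    | succ k ih =>
      rcases Part.mem_bind_iff.1 h with ⟨b, hb, h2⟩
      exact Part.mem_bind_iff.2 ⟨b, ih hb, ihg h2⟩
  | rfind hf ihf =>
    intro m a h
    obtain ⟨h1, h2⟩ := Nat.mem_rfind.1 h
    refine Nat.mem_rfind.2 ⟨?_, ?_⟩
    · rcases (Part.mem_map_iff _).1 h1 with ⟨v, hv, hv2⟩
      exact (Part.mem_map_iff _).2 ⟨v, ihf hv, hv2⟩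
    · intro j hj
      rcases (Part.mem_map_iff _).1 (h2 hj) with ⟨v, hv, hv2⟩
      exact (Part.mem_map_iff _).2 ⟨v, ihf hv, hv2⟩


theorem rec_mono {F G : (ℕ →. ℕ) → ℕ →. ℕ} (hf : PartrecIn F) (hg : PartrecIn G)
    {O O' : ℕ →. ℕ} (hOO : ∀ k a, a ∈ O k → a ∈ O' k) (x : ℕ) :
    ∀ (k : ℕ) {a : ℕ},
      a ∈ (Nat.rec (F O x) (fun y IH => do let i ← IH; G O (Nat.pair x (Nat.pair y i))) k :
        Part ℕ) →
      a ∈ (Nat.rec (F O' x) (fun y IH => do let i ← IH; G O' (Nat.pair x (Nat.pair y i))) k :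
        Part ℕ) := by
  intro k
  induction k with
  | zero => exact fun h => hf.mono hOO h
  | succ k ih =>
    intro a h
    rcases Part.mem_bind_iff.1 h with ⟨b, hb, h2⟩
    exact Part.mem_bind_iff.2 ⟨b, ih hb, hg.mono hOO h2⟩

/-- restriction of an oracle to a finite set -/
def restrO (O : ℕ →. ℕ) (s : Finset ℕ) : ℕ →. ℕ := fun k =>
  if k ∈ s then O k else Part.none

theorem restrO_le (O : ℕ →. ℕ) {s t : Finset ℕ} (hst : s ⊆ t) :
    ∀ k a, a ∈ restrO O s k → a ∈ restrO O t k := by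
  intro k a h
  unfold restrO at h ⊢
  split at h
  · rw [if_pos (hst ‹_›)]; exact h
  · exact absurd h (Part.notMem_none a)

theorem restrO_le_self (O : ℕ →. ℕ) (s : Finset ℕ) :
    ∀ k a, a ∈ restrO O s k → a ∈ O k := by
  intro k a h
  unfold restrO at h
  split at h
  · exact h
  · exact absurd h (Part.notMem_none a)

theorem PartrecIn.compact {F} (hF : PartrecIn F) :
    ∀ {O : ℕ →. ℕ} {m a}, a ∈ F O m → ∃ s : Finset ℕ, a ∈ F (restrO O s) m := by
  induction hF with
  | oracle =>
    intro O m a h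
    exact ⟨{m}, by simpa [restrO] using h⟩
  | zero => exact fun h => ⟨∅, h⟩
  | succ => exact fun h => ⟨∅, h⟩
  | left => exact fun h => ⟨∅, h⟩
  | right => exact fun h => ⟨∅, h⟩
  | pair hf hg ihf ihg =>
    intro O m a h
    simp only [Seq.seq, Part.bind_eq_bind, Part.mem_bind_iff, Part.map_eq_map,
      Part.mem_map_iff] at h ⊢
    obtain ⟨b, ⟨b', hb', rfl⟩, c, hc, rfl⟩ := h
    obtain ⟨s1, hs1⟩ := ihf hb'
    obtain ⟨s2, hs2⟩ := ihg hc
    exact ⟨s1 ∪ s2, _, ⟨b', hf.mono (restrO_le O Finset.subset_union_left) hs1, rfl⟩,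
      c, hg.mono (restrO_le O Finset.subset_union_right) hs2, rfl⟩
  | comp hf hg ihf ihg =>
    intro O m a h
    rcases Part.mem_bind_iff.1 h with ⟨b, hb, h2⟩
    obtain ⟨s1, hs1⟩ := ihg hb
    obtain ⟨s2, hs2⟩ := ihf h2
    exact ⟨s1 ∪ s2, Part.mem_bind_iff.2
      ⟨b, hg.mono (restrO_le O Finset.subset_union_left) hs1,
        hf.mono (restrO_le O Finset.subset_union_right) hs2⟩⟩
  | prec hf hg ihf ihg =>
    intro O m a h
    simp only [Nat.unpaired] at h ⊢
    generalize m.unpair.2 = k at h ⊢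
    induction k generalizing a with
    | zero => exact ihf h
    | succ k ih =>
      rcases Part.mem_bind_iff.1 h with ⟨b, hb, h2⟩
      obtain ⟨s1, hs1⟩ := ih hb
      obtain ⟨s2, hs2⟩ := ihg h2
      exact ⟨s1 ∪ s2, Part.mem_bind_iff.2
        ⟨b, rec_mono hf hg (restrO_le O Finset.subset_union_left) _ k hs1,
          hg.mono (restrO_le O Finset.subset_union_right) hs2⟩⟩
  | @rfind F' hf ihf =>
    intro O m a h
    obtain ⟨h1, h2⟩ := Nat.mem_rfind.1 h
    have key : ∀ j, ∃ s : Finset ℕ, j ≤ a →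
        ∃ v, v ∈ F' (restrO O s) (Nat.pair m j) ∧ ((v = 0) ↔ (j = a)) := by
      intro j
      by_cases hj : j ≤ a
      · rcases lt_or_eq_of_le hj with hlt | rfl
        · have h2' := h2 hlt
          rw [Part.map_eq_map, Part.mem_map_iff _] at h2'
          obtain ⟨v, hv, hv2⟩ := h2'
          obtain ⟨s, hs⟩ := ihf hv
          refine ⟨s, fun _ => ⟨v, hs, ?_⟩⟩
          simp only [decide_eq_false_iff_not] at hv2
          simp [hv2, Nat.ne_of_lt hlt]
        · rw [Part.map_eq_map, Part.mem_map_iff _] at h1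
          obtain ⟨v, hv, hv2⟩ := h1
          obtain ⟨s, hs⟩ := ihf hv
          refine ⟨s, fun _ => ⟨v, hs, ?_⟩⟩
          simp only [decide_eq_true_eq] at hv2
          simp [hv2]
      · exact ⟨∅, fun h' => absurd h' hj⟩
    choose f hf2 using key
    refine ⟨(Finset.range (a + 1)).sup f, ?_⟩
    refine Nat.mem_rfind.2 ?_
    constructor
    · obtain ⟨v, hv, hiff⟩ := hf2 a le_rfl
      have hv' := hf.mono (restrO_le O (Finset.le_sup (Finset.self_mem_range_succ a))) hv
      rw [Part.map_eq_map]
      exact (Part.mem_map_iff _).2 ⟨v, hv', by simp [hiff.2 rfl]⟩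
    · intro j hj
      obtain ⟨v, hv, hiff⟩ := hf2 j (le_of_lt hj)
      have hv' := hf.mono
        (restrO_le O (Finset.le_sup (Finset.mem_range.2 (Nat.lt_succ_of_lt hj)))) hv
      rw [Part.map_eq_map]
      refine (Part.mem_map_iff _).2 ⟨v, hv', ?_⟩
      have : v ≠ 0 := fun h0 => absurd (hiff.1 h0) (Nat.ne_of_lt hj)
      simp [this]

theorem PartrecIn.exists_finset {F} (hF : PartrecIn F) {O : ℕ →. ℕ} {m a : ℕ}
    (h : a ∈ F O m) :
    ∃ s : Finset ℕ, ∀ O' : ℕ →. ℕ, (∀ k ∈ s, O k = O' k) → a ∈ F O' m := by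
  obtain ⟨s, hs⟩ := hF.compact h
  refine ⟨s, fun O' hO' => hF.mono ?_ hs⟩
  intro k b hb
  unfold restrO at hb
  split at hb
  · rw [← hO' k ‹_›]; exact hb
  · exact absurd hb (Part.notMem_none b)

open TopologicalSpace

theorem exists_ne_mem_of_isOpen {n : ℕ} (hn : 0 < n) {U : Set (Fin n → ℝ)} (hU : IsOpen U)
    {q : Fin n → ℝ} (hq : q ∈ U) : ∃ p ∈ U, p ≠ q := by
  haveI : Nonempty (Fin n) := ⟨⟨0, hn⟩⟩
  have h1 : U ∈ nhdsWithin q {q}ᶜ := mem_nhdsWithin_of_mem_nhds (hU.mem_nhds hq)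
  have h2 := Filter.inter_mem h1 self_mem_nhdsWithin
  obtain ⟨p, hp1, hp2⟩ := Filter.nonempty_of_mem h2
  exact ⟨p, hp1, hp2⟩

theorem localBasis_avoid {n : ℕ} (hn : 0 < n) (dom : Set ℕ)
    (code : ℕ → Set (Fin n → ℝ))
    (hbasis : IsTopologicalBasis (code '' dom)) (y : Fin n → ℝ) (s : Finset ℕ) :
    IsLocalBasis (code '' dom) (code '' {k | k ∈ dom ∧ y ∈ code k ∧ k ∉ s}) y := by
  classical
  refine ⟨?_, ?_, ?_⟩
  · rintro _ ⟨k, ⟨hk, _, _⟩, rfl⟩; exact ⟨k, hk, rfl⟩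
  · rintro _ ⟨k, ⟨_, hy, _⟩, rfl⟩; exact hy
  · have main : ∀ N (b : Set (Fin n → ℝ)), IsOpen b → y ∈ b →
        (s.filter fun k => k ∈ dom ∧ y ∈ code k ∧ code k ⊆ b).card ≤ N →
        ∃ k, (k ∈ dom ∧ y ∈ code k ∧ k ∉ s) ∧ code k ⊆ b := by
      intro N
      induction N with
      | zero =>
        intro b hb hyb hcard
        obtain ⟨c, ⟨k₀, hk₀, rfl⟩, hyc, hcb⟩ := hbasis.exists_subset_of_mem_open hyb hb
        by_cases hk₀s : k₀ ∈ s
        · exfalso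
          have : k₀ ∈ s.filter fun k => k ∈ dom ∧ y ∈ code k ∧ code k ⊆ b :=
            Finset.mem_filter.2 ⟨hk₀s, hk₀, hyc, hcb⟩
          have := Finset.card_pos.2 ⟨k₀, this⟩
          omega
        · exact ⟨k₀, ⟨hk₀, hyc, hk₀s⟩, hcb⟩
      | succ N ih =>
        intro b hb hyb hcard
        obtain ⟨c, ⟨k₀, hk₀, rfl⟩, hyc, hcb⟩ := hbasis.exists_subset_of_mem_open hyb hb
        by_cases hk₀s : k₀ ∈ s
        · have hopen : IsOpen (code k₀) := hbasis.isOpen ⟨k₀, hk₀, rfl⟩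
          obtain ⟨p, hp, hpne⟩ := exists_ne_mem_of_isOpen hn hopen hyc
          set b' := code k₀ ∩ {p}ᶜ with hb'
          have hb'open : IsOpen b' := hopen.inter isOpen_compl_singleton
          have hyb' : y ∈ b' := ⟨hyc, fun h => hpne (h.symm)⟩
          have hsub : (s.filter fun k => k ∈ dom ∧ y ∈ code k ∧ code k ⊆ b') ⊂
              s.filter fun k => k ∈ dom ∧ y ∈ code k ∧ code k ⊆ b := by
            refine Finset.ssubset_iff_of_subset ?_ |>.2 ?_
            · intro k hk
              rw [Finset.mem_filter] at hk ⊢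
              exact ⟨hk.1, hk.2.1, hk.2.2.1,
                hk.2.2.2.trans ((Set.inter_subset_left).trans hcb)⟩
            · refine ⟨k₀, Finset.mem_filter.2 ⟨hk₀s, hk₀, hyc, hcb⟩, ?_⟩
              rw [Finset.mem_filter]
              rintro ⟨-, -, -, hsub'⟩
              exact (hsub' hp).2 rfl
          have hcard' : (s.filter fun k => k ∈ dom ∧ y ∈ code k ∧ code k ⊆ b').card ≤ N := by
            have := Finset.card_lt_card hsub
            omega
          obtain ⟨k, hk1, hk2⟩ := ih b' hb'open hyb' hcard'
          exact ⟨k, hk1, hk2.trans ((Set.inter_subset_left).trans hcb)⟩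
        · exact ⟨k₀, ⟨hk₀, hyc, hk₀s⟩, hcb⟩
    intro b hb hyb
    obtain ⟨k, hk1, hk2⟩ := main _ b (hbasis.isOpen hb) hyb le_rfl
    exact ⟨code k, ⟨k, hk1, rfl⟩, hk2⟩

/-- The canonical representation, possibly augmented by finitely many sets
containing another point `x`, is a basic representation of `{y}`. -/
theorem basicRep_aug {n : ℕ} (hn : 0 < n) (dom : Set ℕ)
    (code : ℕ → Set (Fin n → ℝ))
    (hbasis : IsTopologicalBasis (code '' dom)) (x y : Fin n → ℝ) (s : Finset ℕ)
    (hxy : ∀ k ∈ s, k ∈ dom → x ∈ code k → x ≠ y) :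
    IsBasicRep dom code {y}
      ({k | k ∈ dom ∧ y ∈ code k ∧ k ∉ s} ∪ {k | k ∈ s ∧ k ∈ dom ∧ x ∈ code k}) := by
  classical
  constructor
  · rintro k (⟨hk, -, -⟩ | ⟨-, hk, -⟩) <;> exact hk
  · intro z
    constructor
    · rintro rfl
      exact ⟨_, localBasis_avoid hn dom code hbasis z s,
        Set.image_mono fun k hk => Or.inl hk⟩
    · rintro ⟨L, ⟨hLB, hLmem, hLref⟩, hLsub⟩
      by_contra hzy
      have hzy' : z ≠ y := hzy
      -- choose a point ≠ z in each augmented set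
      have hq : ∀ k, ∃ q : Fin n → ℝ, (k ∈ s ∧ k ∈ dom ∧ x ∈ code k) →
          q ∈ code k ∧ q ≠ z := by
        intro k
        by_cases hk : k ∈ s ∧ k ∈ dom ∧ x ∈ code k
        · by_cases hxz : x = z
          · obtain ⟨p, hp, hpne⟩ := exists_ne_mem_of_isOpen hn
              (hbasis.isOpen ⟨k, hk.2.1, rfl⟩) (hxz ▸ hk.2.2)
            exact ⟨p, fun _ => ⟨hp, hpne⟩⟩
          · exact ⟨x, fun _ => ⟨hk.2.2, hxz⟩⟩
        · exact ⟨z, fun h => absurd h hk⟩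
      choose q hq using hq
      set A : Set (Fin n → ℝ) := {y} ∪ q '' {k | k ∈ s ∧ k ∈ dom ∧ x ∈ code k} with hA
      have hAfin : A.Finite := by
        refine (Set.finite_singleton y).union (Set.Finite.image _ ?_)
        exact s.finite_toSet.subset fun k hk => hk.1
      have hzA : z ∈ Aᶜ := by
        rintro (rfl | ⟨k, hk, hqk⟩)
        · exact hzy rfl
        · exact (hq k hk).2 hqk
      obtain ⟨c, ⟨k₀, hk₀, rfl⟩, hzc, hcV⟩ :=
        hbasis.exists_subset_of_mem_open hzA hAfin.isClosed.isOpen_compl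
      obtain ⟨l, hlL, hlc⟩ := hLref (code k₀) ⟨k₀, hk₀, rfl⟩ hzc
      obtain ⟨k, hk, rfl⟩ := hLsub hlL
      rcases hk with ⟨-, hyk, -⟩ | hk
      · exact (hcV (hlc hyk)) (Or.inl rfl)
      · exact (hcV (hlc (hq k hk).1)) (Or.inr ⟨k, hk, rfl⟩)

/-- Let `B` be a countable basis for the standard topology of `ℝⁿ`
(`n ≥ 1`), coded by `ν = code` on the domain `dom`.  Then there is no partial recursive
oracle functional `F` such that for every point `x ∈ ℝⁿ` and every basic representation
`R` of `{x}`, the function `m ↦ F(χ_R, m)` (computed with oracle access to the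
characteristic function `χ_R` of `R`) is total and is an oracle for `x` in `(B, ν)`. -/
theorem no_uniform_oracle_from_basicRep (n : ℕ) (hn : 0 < n)
    (dom : Set ℕ) (code : ℕ → Set (Fin n → ℝ))
    (hbasis : TopologicalSpace.IsTopologicalBasis (code '' dom)) :
    ¬ ∃ F : (ℕ →. ℕ) → ℕ →. ℕ, PartrecIn F ∧
        ∀ (x : Fin n → ℝ) (R : Set ℕ), IsBasicRep dom code {x} R →
          ∃ g : ℕ → ℕ,
            (∀ m, F (fun k => Part.some (R.indicator (fun _ => 1) k)) m
                = Part.some (g m)) ∧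
            IsOracleFor dom code x g := by
  classical
  haveI : Nonempty (Fin n) := ⟨⟨0, hn⟩⟩
  rintro ⟨F, hFpr, hF⟩
  set x : Fin n → ℝ := fun _ => 0 with hxdef
  set R : Set ℕ := {k | k ∈ dom ∧ x ∈ code k ∧ k ∉ (∅ : Finset ℕ)} ∪
    {k | k ∈ (∅ : Finset ℕ) ∧ k ∈ dom ∧ x ∈ code k} with hRdef
  have hR : IsBasicRep dom code {x} R :=
    basicRep_aug hn dom code hbasis x x ∅ (by simp)
  obtain ⟨g, hgeq, hgdom, hgLB⟩ := hF x R hR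
  -- a bounded basic neighborhood of x
  set U : Set (Fin n → ℝ) := {v | v ⟨0, hn⟩ < 1} with hUdef
  have hUopen : IsOpen U := isOpen_lt (continuous_apply _) continuous_const
  have hxU : x ∈ U := by simp [hUdef, hxdef]
  obtain ⟨c, hcB, hxc, hcU⟩ := hbasis.exists_subset_of_mem_open hxU hUopen
  obtain ⟨l, hlL, hlc⟩ := hgLB.2.2 c hcB hxc
  obtain ⟨k', hkr, rfl⟩ := hlL
  obtain ⟨m₀, rfl⟩ := hkr
  -- use of the oracle machine only reads a finite part of the oracle
  have hmem : g m₀ ∈ F (fun k => Part.some (R.indicator (fun _ => 1) k)) m₀ := by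
    rw [hgeq m₀]; exact Part.mem_some _
  obtain ⟨s, hs⟩ := hFpr.exists_finset hmem
  -- a far-away point y
  set y : Fin n → ℝ := fun _ => 2 with hydef
  have hxy : x ≠ y := by
    intro h
    have := congrFun h ⟨0, hn⟩
    norm_num [hxdef, hydef] at this
  set R' : Set ℕ := {k | k ∈ dom ∧ y ∈ code k ∧ k ∉ s} ∪
    {k | k ∈ s ∧ k ∈ dom ∧ x ∈ code k} with hR'def
  have hR' : IsBasicRep dom code {y} R' :=
    basicRep_aug hn dom code hbasis x y s (fun _ _ _ _ => hxy)
  obtain ⟨g', hg'eq, hg'dom, hg'LB⟩ := hF y R' hR'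
  have hagree : ∀ k ∈ s,
      (fun k => Part.some (R.indicator (fun _ => 1) k)) k =
      (fun k => Part.some (R'.indicator (fun _ => 1) k)) k := by
    intro k hk
    have hiff : k ∈ R ↔ k ∈ R' := by
      constructor
      · rintro (⟨h1, h2, -⟩ | ⟨h0, -⟩)
        · exact Or.inr ⟨hk, h1, h2⟩
        · exact absurd h0 (Finset.notMem_empty k)
      · rintro (⟨-, -, hks⟩ | ⟨-, h1, h2⟩)
        · exact absurd hk hks
        · exact Or.inl ⟨h1, h2, Finset.notMem_empty k⟩
    simp only [Set.indicator_apply]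
    by_cases hkR : k ∈ R
    · rw [if_pos hkR, if_pos (hiff.1 hkR)]
    · rw [if_neg hkR, if_neg (fun h => hkR (hiff.2 h))]
  have hsame := hs _ hagree
  rw [hg'eq m₀] at hsame
  have heq : g m₀ = g' m₀ := Part.mem_some_iff.1 hsame
  have hy : y ∈ code (g' m₀) := hg'LB.2.1 _ ⟨g' m₀, ⟨m₀, rfl⟩, rfl⟩
  rw [← heq] at hy
  have : y ∈ U := hcU (hlc hy)
  norm_num [hUdef, hydef] at this
end

section
/- Let (S, A) be a physical model in normal form with A = {ϖ₁ⁿ, …, ϖₙⁿ}, and let (R, H) be a basic representation of (S, A) in a T₁ effective topology (B, ν) = (B₁, ν₁) ⊗ (B₂, ν₂) ⊗ ⋯ ⊗ (Bₙ, νₙ). If k ≤ n and φ₁, …, φ_k are complete oracles for real numbers x₁, …, x_k in the effective topologies (B₁, ν₁), …, (B_k, ν_k) respectively, then the set Q = { r ∈ R : for every i ∈ {1, …, k} there exists m ∈ ℕ with πᵢⁿ(r) = φᵢ(m) } is a basic representation in (B, ν) of the predicted set P = { s ∈ S : ϖ₁ⁿ(s) = x₁ and … and ϖ_kⁿ(s)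 = x_k }, and Q is recursively enumerable relative to R, φ₁, …, φ_k, uniformly. -/
/-- An oracle for `x` is complete iff every code of a basis element containing `x`
appears in its range. -/
def IsCompleteOracleFor {X : Type*} (dom : Set ℕ) (code : ℕ → Set X) (x : X)
    (φ : ℕ → ℕ) : Prop :=
  IsOracleFor dom code x φ ∧ ∀ n ∈ dom, x ∈ code n → n ∈ Set.range φ

/-- The domain of the coding of the effective product
`(B₁, ν₁) ⊗ ⋯ ⊗ (Bₙ, νₙ)`: the codes `r = ⟨u₁, …, uₙ⟩` all of whose components
`uᵢ = πᵢⁿ(r)` lie in the respective domains. -/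
def prodDom (n : ℕ) (dom : Fin n → Set ℕ) (π : Fin n → ℕ → ℕ) : Set ℕ :=
  { r | ∀ i : Fin n, π i r ∈ dom i }

/-- The coding of the effective product: `ν⟨u₁, …, uₙ⟩ = ν₁(u₁) × ⋯ × νₙ(uₙ)`. -/
def prodCode (n : ℕ) (code : Fin n → ℕ → Set ℝ) (π : Fin n → ℕ → ℕ) :
    ℕ → Set (Fin n → ℝ) :=
  fun r => { x | ∀ i : Fin n, x i ∈ code i (π i r) }

/-- The join of (the characteristic function of) the set `R` and the oracles
`φ₁, …, φ_k` into a single total oracle. -/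
noncomputable def joinOracle (k : ℕ) (R : Set ℕ) (φ : Fin k → ℕ → ℕ) : ℕ →. ℕ :=
  fun m =>
    if m.unpair.1 = 0 then Part.some (R.indicator (fun _ => 1) m.unpair.2)
    else if h : m.unpair.1 - 1 < k then Part.some (φ ⟨m.unpair.1 - 1, h⟩ m.unpair.2)
    else Part.some 0

section PredictionAux

/-- Extract the `i`-th component of a nested-`Nat.pair` tuple. -/
def extractNth : ℕ → ℕ → ℕ
  | 0, m => m.unpair.1
  | i + 1, m => extractNth i m.unpair.2

/-- Encode a list by nested `Nat.pair`s. -/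
def tupEnc : List ℕ → ℕ
  | [] => 0
  | a :: l => Nat.pair a (tupEnc l)

theorem extractNth_tupEnc : ∀ (l : List ℕ) (i : ℕ) (h : i < l.length),
    extractNth i (tupEnc l) = l.get ⟨i, h⟩
  | a :: l, 0, _ => by simp [tupEnc, extractNth]
  | a :: l, i + 1, h => by
    simp only [tupEnc, extractNth, Nat.unpair_pair]
    exact extractNth_tupEnc l i (by simpa using h)

theorem primrec_extractNth : ∀ i : ℕ, Primrec (extractNth i)
  | 0 => Primrec.fst.comp Primrec.unpair
  | i + 1 => (primrec_extractNth i).comp (Primrec.snd.comp Primrec.unpair)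

theorem PartrecIn.of_eq {F G : (ℕ →. ℕ) → ℕ →. ℕ} (h : PartrecIn F)
    (e : ∀ O n, F O n = G O n) : PartrecIn G := by
  have : F = G := funext fun O => funext (e O)
  rwa [this] at h

theorem PartrecIn.const (f : ℕ →. ℕ) (hf : Nat.Partrec f) : PartrecIn fun _ => f := by
  induction hf with
  | zero => exact .zero
  | succ => exact .succ
  | left => exact .left
  | right => exact .right
  | pair _ _ ihf ihg => exact .pair ihf ihg
  | comp _ _ ihf ihg => exact .comp ihf ihg
  | prec _ _ ihf ihg => exact .prec ihf ihg
  | rfind _ ih => exact .rfind ih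

theorem PartrecIn.totalConst {f : ℕ → ℕ} (hf : Computable f) :
    PartrecIn fun _ => (f : ℕ →. ℕ) :=
  PartrecIn.const _ (Partrec.nat_iff.1 hf)

/-- One oracle query at address `e p` followed by a total test `g`. -/
def checkFun (e : ℕ → ℕ) (g : ℕ → ℕ → ℕ) : (ℕ →. ℕ) → ℕ →. ℕ :=
  fun O p => (Nat.pair <$> (Part.some p) <*> O (e p)) >>=
    fun v => Part.some (g v.unpair.1 v.unpair.2)

theorem checkFun_partrecIn {e : ℕ → ℕ} {g : ℕ → ℕ → ℕ} (he : Computable e)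
    (hg : Computable fun v : ℕ => g v.unpair.1 v.unpair.2) : PartrecIn (checkFun e g) := by
  have h1 : PartrecIn fun (_ : ℕ →. ℕ) (n : ℕ) => Part.some n :=
    (PartrecIn.totalConst Computable.id).of_eq fun O n => rfl
  have h2 : PartrecIn fun (O : ℕ →. ℕ) n => O (e n) :=
    (PartrecIn.comp .oracle (PartrecIn.totalConst he)).of_eq fun O n => by exact Part.bind_some _ _
  exact (PartrecIn.comp (PartrecIn.totalConst hg) (PartrecIn.pair h1 h2)).of_eq
    fun O n => rfl

theorem checkFun_eval {e : ℕ → ℕ} {g : ℕ → ℕ → ℕ} {O : ℕ →. ℕ} {p a : ℕ}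
    (h : O (e p) = Part.some a) : checkFun e g O p = Part.some (g p a) := by
  simp [checkFun, h, Seq.seq]

/-- Add the results of two oracle computations. -/
def addPart (F G : (ℕ →. ℕ) → ℕ →. ℕ) : (ℕ →. ℕ) → ℕ →. ℕ :=
  fun O p => (Nat.pair <$> F O p <*> G O p) >>= fun v => Part.some (v.unpair.1 + v.unpair.2)

theorem addPart_partrecIn {F G : (ℕ →. ℕ) → ℕ →. ℕ} (hF : PartrecIn F) (hG : PartrecIn G) :
    PartrecIn (addPart F G) := by
  have hadd : Computable fun v : ℕ => v.unpair.1 + v.unpair.2 :=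
    (Primrec.nat_add.comp (Primrec.fst.comp Primrec.unpair)
      (Primrec.snd.comp Primrec.unpair)).to_comp
  exact (PartrecIn.comp (PartrecIn.totalConst hadd) (PartrecIn.pair hF hG)).of_eq
    fun O n => rfl

theorem addPart_eval {F G : (ℕ →. ℕ) → ℕ →. ℕ} {O : ℕ →. ℕ} {p a b : ℕ}
    (hF : F O p = Part.some a) (hG : G O p = Part.some b) :
    addPart F G O p = Part.some (a + b) := by
  simp [addPart, hF, hG, Seq.seq]

theorem foldr_addPart_partrecIn : ∀ (L : List ((ℕ →. ℕ) → ℕ →. ℕ)),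
    (∀ f ∈ L, PartrecIn f) → ∀ {c : (ℕ →. ℕ) → ℕ →. ℕ}, PartrecIn c →
    PartrecIn (L.foldr addPart c)
  | [], _, _, hc => hc
  | f :: L, hL, _, hc =>
    addPart_partrecIn (hL f (by simp))
      (foldr_addPart_partrecIn L (fun g hg => hL g (by simp [hg])) hc)

theorem foldr_addPart_eval {O : ℕ →. ℕ} {p : ℕ} :
    ∀ {L : List ((ℕ →. ℕ) → ℕ →. ℕ)} {vs : List ℕ},
      List.Forall₂ (fun f v => f O p = Part.some v) L vs →
      ∀ {c : (ℕ →. ℕ) → ℕ →. ℕ} {a : ℕ}, c O p = Part.some a →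
      (L.foldr addPart c) O p = Part.some (vs.sum + a) := by
  intro L vs h
  induction h with
  | nil => intro c a hc; simpa using hc
  | cons hf _ ih =>
    intro c a hc
    simp only [List.foldr_cons, List.sum_cons]
    rw [add_assoc]
    exact addPart_eval hf (ih hc)

theorem true_mem_zeroTest_iff {v : ℕ} :
    (true ∈ (fun z : ℕ => z = 0 : ℕ → Bool) <$> Part.some v) ↔ v = 0 := by simp

end PredictionAux

/-- Let `(S, A)` be a physical model in normal form with
`A = {ϖ₁ⁿ, …, ϖₙⁿ}` and let `(R, H)` be a basic representation of `(S, A)` in a `T₁`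
effective topology `(B, ν) = (B₁, ν₁) ⊗ ⋯ ⊗ (Bₙ, νₙ)`.  If `k ≤ n` and `φ₁, …, φ_k` are
complete oracles for real numbers `x₁, …, x_k` in `(B₁, ν₁), …, (B_k, ν_k)`, then
`Q = { r ∈ R : ∀ i ≤ k ∃ m, πᵢⁿ(r) = φᵢ(m) }` is a basic representation in `(B, ν)` of
the predicted set `P = { s ∈ S : ϖ₁ⁿ(s) = x₁ ∧ ⋯ ∧ ϖ_kⁿ(s) = x_k }`, and `Q` is
recursively enumerable relative to `R, φ₁, …, φ_k`, uniformly. -/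
theorem prediction_basicRep (n k : ℕ) (hk : k ≤ n)
    (dom : Fin n → Set ℕ) (code : Fin n → ℕ → Set ℝ)
    (π : Fin n → ℕ → ℕ) (hπ : ∀ i : Fin n, IsProjection n i (π i))
    (hπc : ∀ i : Fin n, Computable (π i)) :
    ∃ F : (ℕ →. ℕ) → ℕ →. ℕ, PartrecIn F ∧
      ∀ (tp : TopologicalSpace (Fin n → ℝ)),
        @T1Space _ tp →
        @TopologicalSpace.IsTopologicalBasis _ tp
          (prodCode n code π '' prodDom n dom π) →
        ∀ (S : Set (Fin n → ℝ)) (R : Set ℕ),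
          IsBasicRep (prodDom n dom π) (prodCode n code π) S R →
          ∀ (x : Fin k → ℝ) (φ : Fin k → ℕ → ℕ),
            (∀ i : Fin k,
              IsCompleteOracleFor (dom (Fin.castLE hk i)) (code (Fin.castLE hk i))
                (x i) (φ i)) →
            IsBasicRep (prodDom n dom π) (prodCode n code π)
                { s ∈ S | ∀ i : Fin k, s (Fin.castLE hk i) = x i }
                { r ∈ R | ∀ i : Fin k, ∃ m, π (Fin.castLE hk i) r = φ i m } ∧
              ∀ q : ℕ,
                q ∈ { r ∈ R | ∀ i : Fin k, ∃ m, π (Fin.castLE hk i) r = φ i m } ↔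
                  (F (joinOracle k R φ) q).Dom := by
    classical
  let C : Fin k → ((ℕ →. ℕ) → ℕ →. ℕ) := fun i =>
    checkFun (fun p => Nat.pair ((i : ℕ) + 1) (extractNth i p.unpair.2))
      (fun p r => if r = π (Fin.castLE hk i) p.unpair.1 then 0 else 1)
  let C0 : (ℕ →. ℕ) → ℕ →. ℕ :=
    checkFun (fun p => Nat.pair 0 p.unpair.1) (fun _ r => if r = 1 then 0 else 1)
  let Hin : (ℕ →. ℕ) → ℕ →. ℕ := (List.ofFn C).foldr addPart C0
  refine ⟨fun O a => Nat.rfind fun m => (fun z => z = 0) <$> Hin O (Nat.pair a m), ?_, ?_⟩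
  · -- PartrecIn
    refine PartrecIn.rfind (foldr_addPart_partrecIn _ ?_ ?_)
    · intro f hf
      rw [List.mem_ofFn] at hf
      obtain ⟨i, rfl⟩ := hf
      refine checkFun_partrecIn ?_ ?_
      · exact (Primrec₂.natPair.comp (Primrec.const _)
          ((primrec_extractNth i).comp (Primrec.snd.comp Primrec.unpair))).to_comp
      · have hc : Computable fun v : ℕ =>
            decide (v.unpair.2 = π (Fin.castLE hk i) v.unpair.1.unpair.1) :=
          (Primrec.eq (α := ℕ)).decide.to_comp.comp
            ((Primrec.snd.comp Primrec.unpair).to_comp)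
            ((hπc (Fin.castLE hk i)).comp
              ((Primrec.fst.comp (Primrec.unpair.comp (Primrec.fst.comp Primrec.unpair))).to_comp))
        exact (Computable.cond hc (Computable.const 0) (Computable.const 1)).of_eq
          fun v => by by_cases h : v.unpair.2 = π (Fin.castLE hk i) v.unpair.1.unpair.1 <;>
            simp [h]
    · refine checkFun_partrecIn ?_ ?_
      · exact (Primrec₂.natPair.comp (Primrec.const 0)
          (Primrec.fst.comp Primrec.unpair)).to_comp
      · have hc : Computable fun v : ℕ => decide (v.unpair.2 = 1) :=
          (Primrec.eq (α := ℕ)).decide.to_comp.comp ((Primrec.snd.comp Primrec.unpair).to_comp)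
            (Computable.const 1)
        exact (Computable.cond hc (Computable.const 0) (Computable.const 1)).of_eq
          fun v => by by_cases h : v.unpair.2 = 1 <;> simp [h]
  · intro tp t1 hBas S R hSR x φ hφ
    have hxi : ∀ (i : Fin k) (m : ℕ), x i ∈ code (Fin.castLE hk i) (φ i m) := fun i m =>
      (hφ i).1.2.2.1 _ ⟨φ i m, ⟨m, rfl⟩, rfl⟩
    constructor
    · -- basic representation
      constructor
      · exact fun r hr => hSR.1 hr.1
      · intro s
        constructor
        · rintro ⟨hsS, hsx⟩
          obtain ⟨L, hL, hLR⟩ := (hSR.2 s).1 hsS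
          refine ⟨L, hL, fun l hl => ?_⟩
          obtain ⟨r, hrR, rfl⟩ := hLR hl
          have hsl : ∀ j : Fin n, s j ∈ code j (π j r) := hL.2.1 _ hl
          refine ⟨r, ⟨hrR, fun i => ?_⟩, rfl⟩
          have hx : x i ∈ code (Fin.castLE hk i) (π (Fin.castLE hk i) r) := by
            rw [← hsx i]; exact hsl (Fin.castLE hk i)
          obtain ⟨m, hm⟩ := (hφ i).2 _ (hSR.1 hrR (Fin.castLE hk i)) hx
          exact ⟨m, hm.symm⟩
        · rintro ⟨L, hL, hLQ⟩
          have hsS : s ∈ S := (hSR.2 s).2 ⟨L, hL, fun l hl => by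
            obtain ⟨r, hr, rfl⟩ := hLQ hl; exact ⟨r, hr.1, rfl⟩⟩
          set t : Fin n → ℝ := fun j => if h : (j : ℕ) < k then x ⟨j, h⟩ else s j with ht
          have htl : ∀ l ∈ L, t ∈ l := by
            intro l hl
            obtain ⟨r, hr, rfl⟩ := hLQ hl
            have hsl : ∀ j : Fin n, s j ∈ code j (π j r) := hL.2.1 _ hl
            intro j
            by_cases h : (j : ℕ) < k
            · obtain ⟨m, hm⟩ := hr.2 ⟨(j : ℕ), h⟩
              have hcast : Fin.castLE hk ⟨(j : ℕ), h⟩ = j := rfl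
              rw [hcast] at hm
              have hxj := hxi ⟨(j : ℕ), h⟩ m
              rw [hcast] at hxj
              simp only [ht, dif_pos h]
              rw [hm]
              exact hxj
            · simp only [ht, dif_neg h]
              exact hsl j
          have hst : s = t := by
            by_contra hne
            obtain ⟨b, hb, hsb, hbu⟩ := hBas.exists_subset_of_mem_open
              (show s ∈ ({t}ᶜ : Set (Fin n → ℝ)) by simpa using hne)
              isOpen_compl_singleton
            obtain ⟨l, hlL, hlb⟩ := hL.2.2 b hb hsb
            exact hbu (hlb (htl l hlL)) rfl
          refine ⟨hsS, fun i => ?_⟩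
          have hlt : ((Fin.castLE hk i : Fin n) : ℕ) < k := i.2
          rw [congrFun hst (Fin.castLE hk i)]
          simp only [ht, dif_pos hlt]
          exact congrArg x (Fin.ext rfl)
    · -- recursive enumerability
      intro q
      set O : ℕ →. ℕ := joinOracle k R φ with hO
      have hC0 : ∀ p : ℕ, C0 O p = Part.some (if p.unpair.1 ∈ R then 0 else 1) := by
        intro p
        have hOv : O (Nat.pair 0 p.unpair.1) = Part.some (if p.unpair.1 ∈ R then 1 else 0) := by
          simp [hO, joinOracle, Nat.unpair_pair, Set.indicator_apply]
        have := checkFun_eval (e := fun p => Nat.pair 0 p.unpair.1)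
          (g := fun _ r => if r = 1 then 0 else 1) hOv
        rw [show C0 O p = checkFun (fun p => Nat.pair 0 p.unpair.1)
          (fun _ r => if r = 1 then 0 else 1) O p from rfl, this]
        by_cases h : p.unpair.1 ∈ R <;> simp [h]
      have hCi : ∀ (i : Fin k) (p : ℕ), C i O p = Part.some
          (if φ i (extractNth i p.unpair.2) = π (Fin.castLE hk i) p.unpair.1 then 0 else 1) := by
        intro i p
        have hOv : O (Nat.pair ((i : ℕ) + 1) (extractNth i p.unpair.2)) =
            Part.some (φ i (extractNth i p.unpair.2)) := by
          have h1 : (i : ℕ) + 1 - 1 < k := by simpa using i.2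
          simp only [hO, joinOracle, Nat.unpair_pair]
          rw [if_neg (Nat.succ_ne_zero _), dif_pos h1]
          congr 1
        exact checkFun_eval hOv
      have hHin : ∀ p : ℕ, Hin O p = Part.some
          ((List.ofFn fun i : Fin k =>
            if φ i (extractNth i p.unpair.2) = π (Fin.castLE hk i) p.unpair.1 then 0 else 1).sum
            + (if p.unpair.1 ∈ R then 0 else 1)) := by
        intro p
        refine foldr_addPart_eval ?_ (hC0 p)
        rw [List.forall₂_iff_get]
        refine ⟨by simp, fun i h1 h2 => ?_⟩
        simp only [List.get_eq_getElem, List.getElem_ofFn]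
        exact hCi _ p
      have hHin' : ∀ q m : ℕ, Hin O (Nat.pair q m) = Part.some
          ((List.ofFn fun i : Fin k =>
            if φ i (extractNth i m) = π (Fin.castLE hk i) q then 0 else 1).sum
            + (if q ∈ R then 0 else 1)) := by
        intro q m
        rw [hHin (Nat.pair q m)]
        simp only [Nat.unpair_pair]
      beta_reduce
      refine Iff.trans ?_ Nat.rfind_dom.symm
      beta_reduce
      constructor
      · rintro ⟨hqR, hqφ⟩
        choose w hw using hqφ
        refine ⟨tupEnc (List.ofFn w), ?_, fun {m} _ => ?_⟩
        · rw [hHin', true_mem_zeroTest_iff]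
          have hsum : (List.ofFn fun i : Fin k =>
              if φ i (extractNth i (tupEnc (List.ofFn w))) = π (Fin.castLE hk i) q then 0
              else 1).sum = 0 := by
            rw [List.sum_eq_zero_iff]
            intro v hv
            rw [List.mem_ofFn] at hv
            obtain ⟨i, rfl⟩ := hv
            have hx : extractNth (i : ℕ) (tupEnc (List.ofFn w)) = w i := by
              rw [extractNth_tupEnc (List.ofFn w) i (by simpa using i.2)]
              simp
            show (if φ i (extractNth (i : ℕ) (tupEnc (List.ofFn w))) =
                π (Fin.castLE hk i) q then 0 else 1) = 0
            rw [hx, if_pos (hw i).symm]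
          rw [hsum, if_pos hqR]
        · rw [hHin']
          exact trivial
      · rintro ⟨m, hm, -⟩
        rw [hHin', true_mem_zeroTest_iff] at hm
        have h1 := Nat.eq_zero_of_add_eq_zero_left hm
        have h2 := Nat.eq_zero_of_add_eq_zero_right hm
        constructor
        · by_contra hqR
          rw [if_neg hqR] at h1
          exact one_ne_zero h1
        · intro i
          rw [List.sum_eq_zero_iff] at h2
          have h3 := h2 _ (List.mem_ofFn.2 ⟨i, rfl⟩)
          by_contra hno
          have h3' : (if φ i (extractNth (i : ℕ) m) = π (Fin.castLE hk i) q then 0 else 1)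
              = 0 := h3
          rw [if_neg (fun heq => hno ⟨_, heq.symm⟩)] at h3'
          exact one_ne_zero h3'
end
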